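/- If r satisfies the ODE r'' sinh r cosh r = (1-(r')^2)(sinh^2 r + n cosh^2 r) with r(0) = ρ > 0 and r'(0) = 0, then r(s) ≥ ρ for all s, i.e. s = 0 is an absolute minimum of r. -/

import Mathlib

theorem stmt1 (n : ℕ) (hn : 1 ≤ n) (ρ : ℝ) (hρ : 0 < ρ) (r : ℝ → ℝ)
    (hr : Differentiable ℝ r) (hr' : Differentiable ℝ (deriv r))
    (hpos : ∀ s, 0 < r s)
    (hode : ∀ s, deriv (deriv r) s * Real.sinh (r s) * Real.cosh (r s) =
      (1 - (deriv r s) ^ 2) * (Real.sinh (r s) ^ 2 + (n : ℝ) * Real.cosh (r s) ^ 2))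
    (h0 : r 0 = ρ) (h0' : deriv r 0 = 0) :
    ∀ s : ℝ, ρ ≤ r s := by
  obtain ⟨k, hk⟩ : ∃ k, 2 * n = k + 1 := ⟨2 * n - 1, by omega⟩
  set E : ℝ → ℝ := fun t =>
    (1 - (deriv r t) ^ 2) * (Real.cosh (r t) ^ 2 * Real.sinh (r t) ^ (2 * n)) with hE
  have hDE : ∀ s, HasDerivAt E 0 s := by
    intro s
    have hv : HasDerivAt r (deriv r s) s := (hr s).hasDerivAt
    have hv' : HasDerivAt (deriv r) (deriv (deriv r) s) s := (hr' s).hasDerivAt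
    have hc : HasDerivAt (fun t => Real.cosh (r t)) (Real.sinh (r s) * deriv r s) s :=
      (Real.hasDerivAt_cosh (r s)).comp s hv
    have hsh : HasDerivAt (fun t => Real.sinh (r t)) (Real.cosh (r s) * deriv r s) s :=
      (Real.hasDerivAt_sinh (r s)).comp s hv
    have h1 : HasDerivAt (fun t => 1 - (deriv r t) ^ 2)
        (-(2 * deriv r s ^ 1 * deriv (deriv r) s)) s := (hv'.pow 2).const_sub 1
    have h2 := (hc.pow 2).mul (hsh.pow (2 * n))
    have hD := h1.mul h2
    convert hD using 1
    · rfl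
    · rfl
    · rfl
    have hode_s := hode s
    rw [hk]
    simp only [Nat.add_sub_cancel, pow_one, Pi.mul_apply, Pi.pow_apply]
    push_cast
    have hkc : (k : ℝ) = 2 * (n : ℝ) - 1 := by
      have h' : ((k : ℝ) + 1) = 2 * (n : ℝ) := by exact_mod_cast congrArg (Nat.cast (R := ℝ)) hk.symm
      linarith
    rw [hkc]
    linear_combination (2 * deriv r s * Real.sinh (r s) ^ k * Real.cosh (r s)) * hode_s
  have hconst : ∀ s, E s = E 0 := by
    intro s
    exact is_const_of_deriv_eq_zero (fun t => (hDE t).differentiableAt)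
      (fun t => (hDE t).deriv) s 0
  intro s
  by_contra hcon
  push_neg at hcon
  have hq := hconst s
  have hsinh_pos : 0 < Real.sinh (r s) := Real.sinh_pos_iff.mpr (hpos s)
  have hsinhρ_pos : 0 < Real.sinh ρ := Real.sinh_pos_iff.mpr hρ
  have hcosh_pos : 0 < Real.cosh (r s) := Real.cosh_pos (r s)
  have hE0 : E 0 = Real.cosh ρ ^ 2 * Real.sinh ρ ^ (2 * n) := by
    simp [hE, h0, h0']
  rw [hE0] at hq
  have hclt : Real.cosh (r s) < Real.cosh ρ := by
    rw [Real.cosh_lt_cosh, abs_of_pos (hpos s), abs_of_pos hρ]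
    exact hcon
  have hslt : Real.sinh (r s) < Real.sinh ρ := Real.sinh_lt_sinh.mpr hcon
  have hPQ : Real.cosh (r s) ^ 2 * Real.sinh (r s) ^ (2 * n) <
      Real.cosh ρ ^ 2 * Real.sinh ρ ^ (2 * n) := by
    have h1 : Real.cosh (r s) ^ 2 ≤ Real.cosh ρ ^ 2 :=
      pow_le_pow_left₀ hcosh_pos.le hclt.le 2
    have h2 : Real.sinh (r s) ^ (2 * n) < Real.sinh ρ ^ (2 * n) :=
      pow_lt_pow_left₀ hslt hsinh_pos.le (by omega)
    exact mul_lt_mul' h1 h2 (pow_nonneg hsinh_pos.le _)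
      (pow_pos (lt_of_lt_of_le hcosh_pos hclt.le) 2)
  have hP : 0 < Real.cosh (r s) ^ 2 * Real.sinh (r s) ^ (2 * n) :=
    mul_pos (pow_pos hcosh_pos 2) (pow_pos hsinh_pos _)
  have hEs : E s = (1 - (deriv r s) ^ 2) *
      (Real.cosh (r s) ^ 2 * Real.sinh (r s) ^ (2 * n)) := rfl
  rw [hEs] at hq
  nlinarith [sq_nonneg (deriv r s),
    mul_nonneg (sq_nonneg (deriv r s)) hP.le]
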